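/- For every positive integer n, the n-th multicast capacity-energy function B ↦ C_n(B) is a concave function of B on the interval [0, B_max]: for all B₁, B₂ ∈ [0, B_max] and all α ∈ [0,1] with β = 1 − α, C_n(αB₁ + βB₂) ≥ α·C_n(B₁) + β·C_n(B₂). -/

import Mathlib

open scoped BigOperators

set_option maxHeartbeats 1000000

noncomputable section

/-- A probability vector on a finite alphabet. -/
def IsProbVec {α : Type} [Fintype α] (p : α → ℝ) : Prop :=
  (∀ a, 0 ≤ p a) ∧ (∑ a, p a) = 1

/-- A (row-stochastic) discrete channel. -/
def IsChannel {α β : Type} [Fintype β] (W : α → β → ℝ) : Prop :=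
  ∀ x, (∀ y, 0 ≤ W x y) ∧ (∑ y, W x y) = 1

/-- The memoryless `n`-letter extension of a channel. -/
def nCh {α β : Type} (W : α → β → ℝ) (n : ℕ) (x : Fin n → α) (y : Fin n → β) : ℝ :=
  ∏ i, W (x i) (y i)

/-- Output distribution induced by input distribution `p` through channel `W`. -/
def outDist {α β : Type} [Fintype α] (p : α → ℝ) (W : α → β → ℝ) (y : β) : ℝ :=
  ∑ x, p x * W x y

/-- Expected value `E[b(Y)]` of an energy function `b` at the channel output. -/
def outEnergy {α β : Type} [Fintype α] [Fintype β] (p : α → ℝ) (W : α → β → ℝ)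
    (b : β → ℝ) : ℝ :=
  ∑ y, outDist p W y * b y

/-- Additive block extension of an energy function. -/
def blockE {β : Type} (b : β → ℝ) {n : ℕ} (y : Fin n → β) : ℝ := ∑ i, b (y i)

/-- Mutual information `I(X;Y)` between the input `X ~ p` and the output of channel `W`. -/
def mutInfo {α β : Type} [Fintype α] [Fintype β] (p : α → ℝ) (W : α → β → ℝ) : ℝ :=
  ∑ x, ∑ y, p x * W x y * Real.log (W x y / outDist p W y)

/-- The `n`-th multicast capacity-energy function with common energy function `b` and
common scalar energy constraint `B`:
`C_n(B) = max_{B-admissible X₁ⁿ} min_ℓ I(X₁ⁿ; Y(ℓ)₁ⁿ)`. -/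
def CnEq {𝓧 𝓨 : Type} [Fintype 𝓧] [Fintype 𝓨] {L : ℕ}
    (W : Fin L → 𝓧 → 𝓨 → ℝ) (b : 𝓨 → ℝ) (B : ℝ) (n : ℕ) : ℝ :=
  sSup { r | ∃ p : (Fin n → 𝓧) → ℝ, IsProbVec p ∧
      (∀ ℓ, (n : ℝ) * B ≤ outEnergy p (nCh (W ℓ) n) (blockE b)) ∧
      r = ⨅ ℓ, mutInfo p (nCh (W ℓ) n) }

/-- The largest commonly deliverable energy:
`B_max = max_q min_ℓ Σ_{x,y} q(x) p_{Y(ℓ)|X}(y|x) b(y)`. -/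
def Bmax {𝓧 𝓨 : Type} [Fintype 𝓧] [Fintype 𝓨] {L : ℕ}
    (W : Fin L → 𝓧 → 𝓨 → ℝ) (b : 𝓨 → ℝ) : ℝ :=
  sSup { r | ∃ q : 𝓧 → ℝ, IsProbVec q ∧ r = ⨅ ℓ, outEnergy q (W ℓ) b }

section CnAux

variable {α β : Type} [Fintype α] [Fintype β]

lemma negMulLog_le_one {t : ℝ} (ht : 0 ≤ t) : Real.negMulLog t ≤ 1 := by
  rcases eq_or_lt_of_le ht with h | h
  · simp [← h]
  · have hlog := Real.one_sub_inv_le_log_of_pos h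
    have h1 : t * t⁻¹ = 1 := mul_inv_cancel₀ h.ne'
    have : Real.negMulLog t = -t * Real.log t := rfl
    nlinarith [h.le]

lemma outDist_nonneg' {p : α → ℝ} {W : α → β → ℝ} (hp : ∀ a, 0 ≤ p a)
    (hW : ∀ x y, 0 ≤ W x y) (y : β) : 0 ≤ outDist p W y :=
  Finset.sum_nonneg fun x _ => mul_nonneg (hp x) (hW x y)

lemma outDist_mix (p₁ p₂ : α → ℝ) (W : α → β → ℝ) (a c : ℝ) (y : β) :
    outDist (fun x => a * p₁ x + c * p₂ x) W y
      = a * outDist p₁ W y + c * outDist p₂ W y := by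
  simp [outDist, add_mul, Finset.sum_add_distrib, Finset.mul_sum, mul_assoc]

lemma outEnergy_mix (p₁ p₂ : α → ℝ) (W : α → β → ℝ) (b : β → ℝ) (a c : ℝ) :
    outEnergy (fun x => a * p₁ x + c * p₂ x) W b
      = a * outEnergy p₁ W b + c * outEnergy p₂ W b := by
  simp only [outEnergy, outDist_mix, add_mul, mul_assoc]
  rw [Finset.sum_add_distrib, Finset.mul_sum, Finset.mul_sum]

lemma sum_outDist {p : α → ℝ} {W : α → β → ℝ} (hp : IsProbVec p) (hW : IsChannel W) :
    ∑ y, outDist p W y = 1 := by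
  unfold outDist
  rw [Finset.sum_comm]
  have : ∀ x, ∑ y, p x * W x y = p x := by
    intro x; rw [← Finset.mul_sum, (hW x).2, mul_one]
  rw [Finset.sum_congr rfl fun x _ => this x, hp.2]

lemma mutInfo_eq {p : α → ℝ} {W : α → β → ℝ} (hp : ∀ a, 0 ≤ p a)
    (hW : ∀ x y, 0 ≤ W x y) :
    mutInfo p W = (∑ x, p x * ∑ y, W x y * Real.log (W x y))
      + ∑ y, Real.negMulLog (outDist p W y) := by
  have key : ∀ x y, p x * W x y * Real.log (W x y / outDist p W y)
      = p x * W x y * Real.log (W x y) - p x * W x y * Real.log (outDist p W y) := by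
    intro x y
    by_cases h : p x * W x y = 0
    · rw [h]; ring
    · rcases mul_ne_zero_iff.mp h with ⟨h1, h2⟩
      have hx : 0 < p x := (hp x).lt_of_ne (Ne.symm h1)
      have hWxy : 0 < W x y := (hW x y).lt_of_ne (Ne.symm h2)
      have hout : 0 < outDist p W y :=
        lt_of_lt_of_le (mul_pos hx hWxy)
          (Finset.single_le_sum (f := fun x => p x * W x y)
            (fun i _ => mul_nonneg (hp i) (hW i y)) (Finset.mem_univ x))
      rw [Real.log_div hWxy.ne' hout.ne', mul_sub]
  have h2 : ∑ x, ∑ y, p x * W x y * Real.log (outDist p W y)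
      = - ∑ y, Real.negMulLog (outDist p W y) := by
    rw [Finset.sum_comm]
    have : ∀ y, ∑ x, p x * W x y * Real.log (outDist p W y)
        = - Real.negMulLog (outDist p W y) := by
      intro y
      rw [← Finset.sum_mul]
      simp [Real.negMulLog, outDist]
    rw [Finset.sum_congr rfl fun y _ => this y]
    simp
  have h3 : ∀ x, ∑ y, p x * W x y * Real.log (W x y)
      = p x * ∑ y, W x y * Real.log (W x y) := by
    intro x; rw [Finset.mul_sum]; exact Finset.sum_congr rfl fun y _ => by ring
  unfold mutInfo
  calc ∑ x, ∑ y, p x * W x y * Real.log (W x y / outDist p W y)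
      = ∑ x, ∑ y, (p x * W x y * Real.log (W x y)
          - p x * W x y * Real.log (outDist p W y)) :=
        Finset.sum_congr rfl fun x _ => Finset.sum_congr rfl fun y _ => key x y
    _ = (∑ x, ∑ y, p x * W x y * Real.log (W x y))
        - ∑ x, ∑ y, p x * W x y * Real.log (outDist p W y) := by
        rw [← Finset.sum_sub_distrib]
        exact Finset.sum_congr rfl fun x _ => Finset.sum_sub_distrib _ _
    _ = (∑ x, p x * ∑ y, W x y * Real.log (W x y))
        + ∑ y, Real.negMulLog (outDist p W y) := by
        rw [h2, Finset.sum_congr rfl fun x _ => h3 x]; ring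

lemma mutInfo_concave {p₁ p₂ : α → ℝ} {W : α → β → ℝ} (hW : IsChannel W)
    (hp₁ : IsProbVec p₁) (hp₂ : IsProbVec p₂) {a c : ℝ} (ha : 0 ≤ a) (hc : 0 ≤ c)
    (hac : a + c = 1) :
    a * mutInfo p₁ W + c * mutInfo p₂ W
      ≤ mutInfo (fun x => a * p₁ x + c * p₂ x) W := by
  have hWnn : ∀ x y, 0 ≤ W x y := fun x y => (hW x).1 y
  have hmixnn : ∀ x, 0 ≤ a * p₁ x + c * p₂ x := fun x =>
    add_nonneg (mul_nonneg ha (hp₁.1 x)) (mul_nonneg hc (hp₂.1 x))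
  rw [mutInfo_eq hp₁.1 hWnn, mutInfo_eq hp₂.1 hWnn, mutInfo_eq hmixnn hWnn]
  have hlin : ∑ x, (a * p₁ x + c * p₂ x) * (∑ y, W x y * Real.log (W x y))
      = a * (∑ x, p₁ x * ∑ y, W x y * Real.log (W x y))
        + c * (∑ x, p₂ x * ∑ y, W x y * Real.log (W x y)) := by
    rw [Finset.mul_sum, Finset.mul_sum, ← Finset.sum_add_distrib]
    exact Finset.sum_congr rfl fun x _ => by ring
  have hent : ∀ y ∈ Finset.univ (α := β),
      a * Real.negMulLog (outDist p₁ W y) + c * Real.negMulLog (outDist p₂ W y)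
        ≤ Real.negMulLog (outDist (fun x => a * p₁ x + c * p₂ x) W y) := by
    intro y _
    rw [outDist_mix]
    have := Real.concaveOn_negMulLog.2 (Set.mem_Ici.mpr (outDist_nonneg' hp₁.1 hWnn y))
      (Set.mem_Ici.mpr (outDist_nonneg' hp₂.1 hWnn y)) ha hc hac
    simpa [smul_eq_mul] using this
  have hsum := Finset.sum_le_sum hent
  rw [Finset.sum_add_distrib, ← Finset.mul_sum, ← Finset.mul_sum] at hsum
  rw [hlin]
  linarith

lemma mutInfo_le_card {p : α → ℝ} {W : α → β → ℝ} (hp : IsProbVec p)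
    (hW : IsChannel W) : mutInfo p W ≤ (Fintype.card β : ℝ) := by
  rw [mutInfo_eq hp.1 (fun x y => (hW x).1 y)]
  have h1 : ∑ x, p x * ∑ y, W x y * Real.log (W x y) ≤ 0 := by
    refine Finset.sum_nonpos fun x _ => mul_nonpos_of_nonneg_of_nonpos (hp.1 x) ?_
    refine Finset.sum_nonpos fun y _ => Real.mul_log_nonpos ((hW x).1 y) ?_
    exact le_of_le_of_eq (Finset.single_le_sum (fun i _ => (hW x).1 i)
      (Finset.mem_univ y)) (hW x).2
  have h2 : ∑ y, Real.negMulLog (outDist p W y) ≤ ∑ _y : β, (1 : ℝ) :=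
    Finset.sum_le_sum fun y _ =>
      negMulLog_le_one (outDist_nonneg' hp.1 (fun x y => (hW x).1 y) y)
  simp only [Finset.sum_const, Finset.card_univ, nsmul_eq_mul, mul_one] at h2
  linarith

lemma sum_pi_prod {γ : Type} [Fintype γ] {n : ℕ} (f : Fin n → γ → ℝ) :
    ∑ y : Fin n → γ, ∏ i, f i (y i) = ∏ i, ∑ z, f i z := by
  classical
  have := Finset.prod_univ_sum (fun _ : Fin n => (Finset.univ : Finset γ)) f
  rw [Fintype.piFinset_univ] at this
  exact this.symm

lemma isChannel_nCh {W : α → β → ℝ} (hW : IsChannel W) (n : ℕ) :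
    IsChannel (nCh W n) := by
  intro x
  refine ⟨fun y => Finset.prod_nonneg fun i _ => (hW (x i)).1 (y i), ?_⟩
  unfold nCh
  rw [sum_pi_prod]
  simp [(hW _).2]

lemma isProbVec_prodP {q : α → ℝ} (hq : IsProbVec q) (n : ℕ) :
    IsProbVec (fun x : Fin n → α => ∏ i, q (x i)) := by
  refine ⟨fun x => Finset.prod_nonneg fun i _ => hq.1 (x i), ?_⟩
  rw [sum_pi_prod]
  simp [hq.2]

lemma outDist_prodP (q : α → ℝ) (W : α → β → ℝ) (n : ℕ) (y : Fin n → β) :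
    outDist (fun x : Fin n → α => ∏ i, q (x i)) (nCh W n) y
      = ∏ i, outDist q W (y i) := by
  unfold outDist nCh
  calc ∑ x : Fin n → α, (∏ i, q (x i)) * ∏ i, W (x i) (y i)
      = ∑ x : Fin n → α, ∏ i, (q (x i) * W (x i) (y i)) :=
        Finset.sum_congr rfl fun x _ => Finset.prod_mul_distrib.symm
    _ = ∏ i, ∑ z, q z * W z (y i) := sum_pi_prod (fun i z => q z * W z (y i))

lemma outEnergy_prodP {q : α → ℝ} {W : α → β → ℝ} (hq : IsProbVec q)
    (hW : IsChannel W) (b : β → ℝ) (n : ℕ) :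
    outEnergy (fun x : Fin n → α => ∏ i, q (x i)) (nCh W n) (blockE b)
      = n * outEnergy q W b := by
  classical
  have hsum1 : ∑ z, outDist q W z = 1 := sum_outDist hq hW
  unfold outEnergy blockE
  simp only [outDist_prodP]
  calc ∑ y : Fin n → β, (∏ i, outDist q W (y i)) * ∑ j, b (y j)
      = ∑ y : Fin n → β, ∑ j, (∏ i, outDist q W (y i)) * b (y j) := by
        exact Finset.sum_congr rfl fun y _ => Finset.mul_sum _ _ _
    _ = ∑ j, ∑ y : Fin n → β, (∏ i, outDist q W (y i)) * b (y j) := Finset.sum_comm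
    _ = ∑ j : Fin n, ∑ y : Fin n → β,
          ∏ i, (if i = j then outDist q W (y i) * b (y i) else outDist q W (y i)) := by
        refine Finset.sum_congr rfl fun j _ => Finset.sum_congr rfl fun y _ => ?_
        rw [← Finset.mul_prod_erase Finset.univ _ (Finset.mem_univ j),
            ← Finset.mul_prod_erase Finset.univ
              (fun i => if i = j then outDist q W (y i) * b (y i) else outDist q W (y i))
              (Finset.mem_univ j)]
        rw [if_pos rfl]
        rw [Finset.prod_congr rfl (fun i hi =>
          if_neg (Finset.ne_of_mem_erase hi) :
          ∀ i ∈ Finset.univ.erase j,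
            (if i = j then outDist q W (y i) * b (y i) else outDist q W (y i))
              = outDist q W (y i))]
        ring
    _ = ∑ j : Fin n, ∏ i : Fin n,
          ∑ z, (if i = j then outDist q W z * b z else outDist q W z) := by
        refine Finset.sum_congr rfl fun j _ => ?_
        exact sum_pi_prod (fun i z => if i = j then outDist q W z * b z else outDist q W z)
    _ = ∑ _j : Fin n, ∑ z, outDist q W z * b z := by
        refine Finset.sum_congr rfl fun j _ => ?_
        have : ∀ i : Fin n, (∑ z, (if i = j then outDist q W z * b z else outDist q W z))
            = if i = j then ∑ z, outDist q W z * b z else 1 := by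
          intro i
          split_ifs with h
          · rfl
          · exact hsum1
        rw [Finset.prod_congr rfl fun i _ => this i]
        simp
    _ = n * ∑ z, outDist q W z * b z := by
        rw [Finset.sum_const, Finset.card_univ, Fintype.card_fin, nsmul_eq_mul]

end CnAux

/-- **Concavity of the `n`-th multicast capacity-energy function** (Theorem 2):
for all `B₁, B₂ ∈ [0, B_max]` and `α ∈ [0,1]` with `β = 1 - α`,
`C_n(α B₁ + β B₂) ≥ α C_n(B₁) + β C_n(B₂)`. -/
theorem CnEq_concave
    {𝓧 𝓨 : Type} [Fintype 𝓧] [Fintype 𝓨] [Nonempty 𝓧] {L : ℕ} (hL : 0 < L)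
    (W : Fin L → 𝓧 → 𝓨 → ℝ) (hW : ∀ ℓ, IsChannel (W ℓ))
    (b : 𝓨 → ℝ) (hb : ∀ y, 0 ≤ b y)
    (n : ℕ) (hn : 0 < n) (B₁ B₂ α : ℝ)
    (hB₁ : B₁ ∈ Set.Icc 0 (Bmax W b)) (hB₂ : B₂ ∈ Set.Icc 0 (Bmax W b))
    (hα : α ∈ Set.Icc (0 : ℝ) 1) :
    α * CnEq W b B₁ n + (1 - α) * CnEq W b B₂ n
      ≤ CnEq W b (α * B₁ + (1 - α) * B₂) n := by
  classical
  obtain ⟨hB₁0, hB₁m⟩ := hB₁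
  obtain ⟨hB₂0, hB₂m⟩ := hB₂
  obtain ⟨hα0, hα1⟩ := hα
  haveI : Nonempty (Fin L) := ⟨⟨0, hL⟩⟩
  set βc := 1 - α with hβdef
  have hβ0 : 0 ≤ βc := by simp only [hβdef]; linarith
  set B₃ := α * B₁ + βc * B₂ with hB₃def
  set S : ℝ → Set ℝ := fun B => { r | ∃ p : (Fin n → 𝓧) → ℝ, IsProbVec p ∧
      (∀ ℓ, (n : ℝ) * B ≤ outEnergy p (nCh (W ℓ) n) (blockE b)) ∧
      r = ⨅ ℓ, mutInfo p (nCh (W ℓ) n) } with hSdef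
  have hCn : ∀ B, CnEq W b B n = sSup (S B) := fun _ => rfl
  have hbdd : ∀ B, BddAbove (S B) := by
    intro B
    refine ⟨(Fintype.card (Fin n → 𝓨) : ℝ), fun r hr => ?_⟩
    obtain ⟨p, hp, -, rfl⟩ := hr
    refine le_trans (ciInf_le (Finite.bddBelow_range _) ⟨0, hL⟩) ?_
    exact mutInfo_le_card hp (isChannel_nCh (hW _) n)
  have hadm : ∀ B : ℝ, B ≤ Bmax W b → (S B).Nonempty := by
    intro B hB
    have hcont : ∀ ℓ, Continuous (fun q : 𝓧 → ℝ => outEnergy q (W ℓ) b) := by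
      intro ℓ
      refine continuous_finset_sum _ fun y _ => Continuous.mul ?_ continuous_const
      exact continuous_finset_sum _ fun x _ => (continuous_apply x).mul continuous_const
    have hgc : Continuous (fun q : 𝓧 → ℝ => ⨅ ℓ, outEnergy q (W ℓ) b) := by
      have heq : (fun q : 𝓧 → ℝ => ⨅ ℓ, outEnergy q (W ℓ) b)
          = fun q => Finset.univ.inf' Finset.univ_nonempty
              (fun ℓ => outEnergy q (W ℓ) b) := by
        funext q; exact (Finset.inf'_univ_eq_ciInf _).symm
      rw [heq]
      exact continuous_iff_continuousAt.mpr fun x =>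
        ContinuousAt.finset_inf'_apply (f := fun ℓ (q : 𝓧 → ℝ) => outEnergy q (W ℓ) b)
          Finset.univ_nonempty fun ℓ _ => (hcont ℓ).continuousAt
    have hq0 : (fun _ : 𝓧 => (Fintype.card 𝓧 : ℝ)⁻¹) ∈ stdSimplex ℝ 𝓧 := by
      constructor
      · intro x; positivity
      · rw [Finset.sum_const, Finset.card_univ, nsmul_eq_mul, mul_inv_cancel₀]
        exact_mod_cast Fintype.card_ne_zero
    obtain ⟨q, hqmem, hqmax⟩ :=
      (isCompact_stdSimplex ℝ 𝓧).exists_isMaxOn ⟨_, hq0⟩ hgc.continuousOn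
    have hqpv : IsProbVec q := ⟨hqmem.1, hqmem.2⟩
    have hBg : Bmax W b ≤ ⨅ ℓ, outEnergy q (W ℓ) b := by
      refine csSup_le ⟨_, ⟨_, (⟨hq0.1, hq0.2⟩ : IsProbVec _), rfl⟩⟩ ?_
      rintro r ⟨q', hq', rfl⟩
      exact hqmax (Set.mem_setOf.mpr ⟨hq'.1, hq'.2⟩)
    refine ⟨⨅ ℓ, mutInfo (fun x : Fin n → 𝓧 => ∏ i, q (x i)) (nCh (W ℓ) n),
      (fun x : Fin n → 𝓧 => ∏ i, q (x i)), isProbVec_prodP hqpv n, ?_, rfl⟩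
    intro ℓ
    rw [outEnergy_prodP hqpv (hW ℓ) b n]
    have hchain : B ≤ outEnergy q (W ℓ) b :=
      le_trans hB (le_trans hBg (ciInf_le (Finite.bddBelow_range _) ℓ))
    exact mul_le_mul_of_nonneg_left hchain (Nat.cast_nonneg n)
  have hkey : ∀ r₁ ∈ S B₁, ∀ r₂ ∈ S B₂, α * r₁ + βc * r₂ ≤ sSup (S B₃) := by
    rintro r₁ ⟨p₁, hp₁, he₁, rfl⟩ r₂ ⟨p₂, hp₂, he₂, rfl⟩
    have hppv : IsProbVec (fun x => α * p₁ x + βc * p₂ x) := by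
      constructor
      · intro x; exact add_nonneg (mul_nonneg hα0 (hp₁.1 x)) (mul_nonneg hβ0 (hp₂.1 x))
      · rw [Finset.sum_add_distrib, ← Finset.mul_sum, ← Finset.mul_sum, hp₁.2, hp₂.2]
        simp [hβdef]
    have henergy : ∀ ℓ, (n : ℝ) * B₃
        ≤ outEnergy (fun x => α * p₁ x + βc * p₂ x) (nCh (W ℓ) n) (blockE b) := by
      intro ℓ
      rw [outEnergy_mix]
      have h1 := mul_le_mul_of_nonneg_left (he₁ ℓ) hα0
      have h2 := mul_le_mul_of_nonneg_left (he₂ ℓ) hβ0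
      have h3 : (n : ℝ) * B₃ = α * ((n : ℝ) * B₁) + βc * ((n : ℝ) * B₂) := by
        rw [hB₃def]; ring
      linarith
    have hmem : (⨅ ℓ, mutInfo (fun x => α * p₁ x + βc * p₂ x) (nCh (W ℓ) n)) ∈ S B₃ :=
      ⟨_, hppv, henergy, rfl⟩
    refine le_trans ?_ (le_csSup (hbdd B₃) hmem)
    refine le_ciInf fun ℓ => ?_
    have hcc := mutInfo_concave (isChannel_nCh (hW ℓ) n) hp₁ hp₂ hα0 hβ0
      (by simp [hβdef] : α + βc = 1)
    refine le_trans ?_ hcc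
    have i1 : (⨅ ℓ', mutInfo p₁ (nCh (W ℓ') n)) ≤ mutInfo p₁ (nCh (W ℓ) n) :=
      ciInf_le (Finite.bddBelow_range _) ℓ
    have i2 : (⨅ ℓ', mutInfo p₂ (nCh (W ℓ') n)) ≤ mutInfo p₂ (nCh (W ℓ) n) :=
      ciInf_le (Finite.bddBelow_range _) ℓ
    exact add_le_add (mul_le_mul_of_nonneg_left i1 hα0) (mul_le_mul_of_nonneg_left i2 hβ0)
  clear_value S B₃ βc
  rw [hCn, hCn, hCn]
  obtain ⟨r₁0, hr₁0⟩ := hadm B₁ hB₁m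
  obtain ⟨r₂0, hr₂0⟩ := hadm B₂ hB₂m
  have step1 : ∀ r₂ ∈ S B₂, α * sSup (S B₁) + βc * r₂ ≤ sSup (S B₃) := by
    intro r₂ hr₂
    rcases eq_or_lt_of_le hα0 with h0 | h0
    · have h := hkey r₁0 hr₁0 r₂ hr₂
      rw [← h0] at h ⊢
      simpa using h
    · have hle : sSup (S B₁) ≤ (sSup (S B₃) - βc * r₂) / α := by
        refine csSup_le ⟨r₁0, hr₁0⟩ fun r₁ hr₁ => ?_
        have h := hkey r₁ hr₁ r₂ hr₂
        rw [le_div_iff₀ h0]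
        linarith
      have h2 : α * ((sSup (S B₃) - βc * r₂) / α) = sSup (S B₃) - βc * r₂ := by
        field_simp
      have h4 : α * sSup (S B₁) ≤ sSup (S B₃) - βc * r₂ :=
        le_of_le_of_eq (mul_le_mul_of_nonneg_left hle h0.le) h2
      linarith
  rcases eq_or_lt_of_le hβ0 with h0 | h0
  · have h := step1 r₂0 hr₂0
    rw [← h0] at h ⊢
    simpa using h
  · have hle : sSup (S B₂) ≤ (sSup (S B₃) - α * sSup (S B₁)) / βc := by
      refine csSup_le ⟨r₂0, hr₂0⟩ fun r₂ hr₂ => ?_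
      have h := step1 r₂ hr₂
      rw [le_div_iff₀ h0]
      linarith
    have h2 : βc * ((sSup (S B₃) - α * sSup (S B₁)) / βc) = sSup (S B₃) - α * sSup (S B₁) := by
      field_simp
    have h4 : βc * sSup (S B₂) ≤ sSup (S B₃) - α * sSup (S B₁) :=
      le_of_le_of_eq (mul_le_mul_of_nonneg_left hle h0.le) h2
    linarith

end
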